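/- For every n ≥ 1 and every n × n bistochastic matrix A, Δ_n(A) ≤ (n-1)/4, and the matrix M_n = ½ I_n + ½ J_n attains this bound: Δ_n(M_n) = (n-1)/4. Here I_n is the identity matrix and J_n is the n × n matrix all of whose entries equal 1/n. -/

import Mathlib

open Matrix BigOperators

def IsBistochastic {n : ℕ} (A : Matrix (Fin n) (Fin n) ℝ) : Prop :=
  (∀ i j, 0 ≤ A i j) ∧ (∀ i, ∑ j, A i j = 1) ∧ (∀ j, ∑ i, A i j = 1)

noncomputable def maxTr {n : ℕ} (A : Matrix (Fin n) (Fin n) ℝ) : ℝ :=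
  ⨆ σ : Equiv.Perm (Fin n), ∑ i, A i (σ i)

def frobSq {n : ℕ} (A : Matrix (Fin n) (Fin n) ℝ) : ℝ :=
  ∑ i, ∑ j, (A i j) ^ 2

/-- `Δ_n(A) = maxTr A − ‖A‖_F²`. -/
noncomputable def Delta {n : ℕ} (A : Matrix (Fin n) (Fin n) ℝ) : ℝ :=
  maxTr A - frobSq A

lemma scalar_bound (m a S : ℝ) (hm : 2 ≤ m) (hC : (1-a)^2 ≤ (m-1)*S) :
    a - (a^2 + S) ≤ (m - 1) / (4*m) := by
  rw [le_div_iff₀ (by linarith)]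
  nlinarith [sq_nonneg (2*m*a - m - 1), mul_le_mul_of_nonneg_left hC (by linarith : (0:ℝ) ≤ m),
    (by linarith : (0:ℝ) < m - 1)]

lemma row_bound {n : ℕ} (x : Fin n → ℝ) (hx : ∀ j, 0 ≤ x j) (hs : ∑ j, x j = 1)
    (k : Fin n) : x k - ∑ j, x j ^ 2 ≤ ((n:ℝ) - 1) / (4 * n) := by
  rcases Nat.lt_or_ge n 2 with h | h
  · have hp : 0 < n := k.pos
    have hn1 : n = 1 := by omega
    subst hn1
    have hk : k = 0 := Subsingleton.elim _ _
    simp only [Fin.sum_univ_one] at hs ⊢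
    subst hk
    rw [hs]
    norm_num
  · set s := Finset.univ.erase k with hs_def
    have hcard : (s.card : ℝ) = (n : ℝ) - 1 := by
      rw [hs_def, Finset.card_erase_of_mem (Finset.mem_univ k)]
      simp only [Finset.card_univ, Fintype.card_fin]
      have : 1 ≤ n := by omega
      push_cast [Nat.cast_sub this]
      ring
    have hsum : ∑ j ∈ s, x j = 1 - x k := by
      have := Finset.sum_erase_add Finset.univ x (Finset.mem_univ k)
      rw [hs_def]; linarith [this.trans hs]
    have hsumsq : ∑ j, x j ^ 2 = ∑ j ∈ s, x j ^ 2 + x k ^ 2 :=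
      (Finset.sum_erase_add Finset.univ (fun j => x j ^ 2) (Finset.mem_univ k)).symm
    have hC : (1 - x k)^2 ≤ ((n:ℝ) - 1) * ∑ j ∈ s, x j ^ 2 := by
      have := sq_sum_le_card_mul_sum_sq (s := s) (f := x)
      rw [hsum] at this
      calc (1 - x k)^2 ≤ (s.card : ℝ) * ∑ j ∈ s, x j ^ 2 := by exact_mod_cast this
        _ = ((n:ℝ) - 1) * ∑ j ∈ s, x j ^ 2 := by rw [hcard]
    have hm : (2:ℝ) ≤ (n:ℝ) := by exact_mod_cast h
    have := scalar_bound (n:ℝ) (x k) (∑ j ∈ s, x j ^ 2) hm hC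
    rw [hsumsq]; linarith

/-- For every `n ≥ 1` and every bistochastic `A`, `Δ_n(A) ≤ (n-1)/4`; and the matrix
`M_n = ½ I_n + ½ J_n` attains the bound. -/
theorem delta_max (n : ℕ) (hn : 1 ≤ n) :
    (∀ A : Matrix (Fin n) (Fin n) ℝ, IsBistochastic A →
      Delta A ≤ ((n : ℝ) - 1) / 4) ∧
    Delta ((1 / 2 : ℝ) • (1 : Matrix (Fin n) (Fin n) ℝ) +
        (1 / 2 : ℝ) • Matrix.of (fun _ _ => (1 : ℝ) / n)) = ((n : ℝ) - 1) / 4 := by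
  have hn0 : (n:ℝ) ≠ 0 := by positivity
  have hnpos : (0:ℝ) < n := by positivity
  constructor
  · -- upper bound
    rintro A ⟨hpos, hrow, hcol⟩
    have key : ∀ σ : Equiv.Perm (Fin n), ∑ i, A i (σ i) ≤ frobSq A + ((n:ℝ) - 1) / 4 := by
      intro σ
      have h1 : ∀ i : Fin n, A i (σ i) - ∑ j, A i j ^ 2 ≤ ((n:ℝ) - 1) / (4 * n) :=
        fun i => row_bound (fun j => A i j) (hpos i) (hrow i) (σ i)
      have h2 : ∑ i, (A i (σ i) - ∑ j, A i j ^ 2) ≤ (n:ℝ) * (((n:ℝ) - 1) / (4 * n)) := by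
        calc ∑ i, (A i (σ i) - ∑ j, A i j ^ 2) ≤ ∑ _i : Fin n, ((n:ℝ) - 1) / (4 * n) :=
              Finset.sum_le_sum fun i _ => h1 i
          _ = (n:ℝ) * (((n:ℝ) - 1) / (4 * n)) := by
              simp [Finset.sum_const, Finset.card_univ, nsmul_eq_mul]
      have h3 : (n:ℝ) * (((n:ℝ) - 1) / (4 * n)) = ((n:ℝ) - 1) / 4 := by
        field_simp
      rw [Finset.sum_sub_distrib] at h2
      unfold frobSq
      linarith [h2, h3.le]
    have : maxTr A ≤ frobSq A + ((n:ℝ) - 1) / 4 := ciSup_le key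
    unfold Delta; linarith
  · -- the matrix M
    set M : Matrix (Fin n) (Fin n) ℝ := (1 / 2 : ℝ) • (1 : Matrix (Fin n) (Fin n) ℝ) +
        (1 / 2 : ℝ) • Matrix.of (fun _ _ => (1 : ℝ) / n) with hM_def
    have hM : ∀ i j, M i j = (if i = j then (1:ℝ)/2 else 0) + 1/(2*(n:ℝ)) := by
      intro i j
      simp only [hM_def, Matrix.add_apply, Matrix.smul_apply, Matrix.one_apply,
        Matrix.of_apply, smul_eq_mul]
      split_ifs <;> ring
    have hdiag : ∀ i : Fin n, M i i = 1/2 + 1/(2*(n:ℝ)) := by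
      intro i; rw [hM i i]; simp
    have htr : ∀ σ : Equiv.Perm (Fin n), ∑ i, M i (σ i) ≤ ((n:ℝ) + 1) / 2 := by
      intro σ
      have : ∑ i, M i (σ i) ≤ ∑ _i : Fin n, ((1:ℝ)/2 + 1/(2*(n:ℝ))) := by
        apply Finset.sum_le_sum
        intro i _
        rw [hM i (σ i)]
        split_ifs <;> simp
      calc ∑ i, M i (σ i) ≤ ∑ _i : Fin n, ((1:ℝ)/2 + 1/(2*(n:ℝ))) := this
        _ = (n:ℝ) * ((1:ℝ)/2 + 1/(2*(n:ℝ))) := by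
            simp only [Finset.sum_const, Finset.card_univ, Fintype.card_fin, nsmul_eq_mul]
        _ = ((n:ℝ) + 1) / 2 := by field_simp
    have hid : ∑ i, M i (i) = ((n:ℝ) + 1) / 2 := by
      calc ∑ i, M i i = ∑ _i : Fin n, ((1:ℝ)/2 + 1/(2*(n:ℝ))) :=
            Finset.sum_congr rfl fun i _ => hdiag i
        _ = (n:ℝ) * ((1:ℝ)/2 + 1/(2*(n:ℝ))) := by
            simp only [Finset.sum_const, Finset.card_univ, Fintype.card_fin, nsmul_eq_mul]
        _ = ((n:ℝ) + 1) / 2 := by field_simp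
    have hmaxTr : maxTr M = ((n:ℝ) + 1) / 2 := by
      apply le_antisymm
      · exact ciSup_le htr
      · have hbdd : BddAbove (Set.range fun σ : Equiv.Perm (Fin n) => ∑ i, M i (σ i)) :=
          Set.Finite.bddAbove (Set.finite_range _)
        have := le_ciSup hbdd (1 : Equiv.Perm (Fin n))
        simpa [hid, maxTr] using this
    have hfrob : frobSq M = ((n:ℝ) + 3) / 4 := by
      unfold frobSq
      have hinner : ∀ i : Fin n, ∑ j, (M i j)^2
          = (n:ℝ) * (1/(2*(n:ℝ)))^2 + (((1:ℝ)/2 + 1/(2*(n:ℝ)))^2 - (1/(2*(n:ℝ)))^2) := by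
        intro i
        have : ∀ j, (M i j)^2 = (1/(2*(n:ℝ)))^2
            + (if i = j then (((1:ℝ)/2 + 1/(2*(n:ℝ)))^2 - (1/(2*(n:ℝ)))^2) else 0) := by
          intro j
          rw [hM i j]
          split_ifs <;> ring
        rw [Finset.sum_congr rfl fun j _ => this j, Finset.sum_add_distrib]
        simp [Finset.sum_const, Finset.card_univ, nsmul_eq_mul]
      rw [Finset.sum_congr rfl fun i _ => hinner i]
      simp only [Finset.sum_const, Finset.card_univ, Fintype.card_fin, nsmul_eq_mul]
      field_simp
      ring
    unfold Delta
    rw [hmaxTr, hfrob]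
    ring
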